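/- arXiv:1506.05170 — 2 statements merged into one kernel-verified Lean document; each statement's English description precedes it below -/
import Mathlib

section
/- Let f : ℝⁿ → ℝ∪{+∞} be a symmetric function. Then for every α > 0 and every symmetric matrix X ∈ Sⁿ, the Moreau envelope satisfies (f∘λ)_α(X) = f_α(λ(X)). -/
open Matrix

/-- The vector of eigenvalues of a symmetric matrix, listed in nonincreasing order
(junk value `0` for non-Hermitian matrices). -/
noncomputable def eigd {n : ℕ} (X : Matrix (Fin n) (Fin n) ℝ) : Fin n → ℝ :=
  if h : X.IsHermitian then
    fun i => h.eigenvalues (Tuple.sort h.eigenvalues i.rev)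
  else 0

/-- A function on `ℝⁿ` is symmetric if it is invariant under coordinate permutations. -/
def IsSymmFn {n : ℕ} (f : (Fin n → ℝ) → EReal) : Prop :=
  ∀ (π : Equiv.Perm (Fin n)) (x : Fin n → ℝ), f (fun i => x (π i)) = f x

/-- Moreau envelope on `ℝⁿ` (Euclidean norm). -/
noncomputable def mEnvV {n : ℕ} (f : (Fin n → ℝ) → EReal) (α : ℝ) (x : Fin n → ℝ) : EReal :=
  ⨅ y : Fin n → ℝ, f y + (((∑ i, (y i - x i) ^ 2) / (2 * α) : ℝ) : EReal)

/-- Proximal mapping on `ℝⁿ` (Euclidean norm). -/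
def proxV {n : ℕ} (f : (Fin n → ℝ) → EReal) (α : ℝ) (x : Fin n → ℝ) : Set (Fin n → ℝ) :=
  {y | ∀ z, f y + (((∑ i, (y i - x i) ^ 2) / (2 * α) : ℝ) : EReal)
      ≤ f z + (((∑ i, (z i - x i) ^ 2) / (2 * α) : ℝ) : EReal)}

/-- Moreau envelope of the spectral function `f ∘ λ` on the space of symmetric
matrices, with respect to the Frobenius norm. -/
noncomputable def mEnvS {n : ℕ} (f : (Fin n → ℝ) → EReal) (α : ℝ)
    (X : Matrix (Fin n) (Fin n) ℝ) : EReal :=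
  ⨅ Y : {Y : Matrix (Fin n) (Fin n) ℝ // Y.IsHermitian},
    f (eigd Y.1) + (((((Y.1 - X)ᵀ * (Y.1 - X)).trace) / (2 * α) : ℝ) : EReal)

/-- Proximal mapping of the spectral function `f ∘ λ` on the space of symmetric
matrices, with respect to the Frobenius norm. -/
def proxS {n : ℕ} (f : (Fin n → ℝ) → EReal) (α : ℝ)
    (X : Matrix (Fin n) (Fin n) ℝ) : Set (Matrix (Fin n) (Fin n) ℝ) :=
  {Y | Y.IsHermitian ∧ ∀ Z : Matrix (Fin n) (Fin n) ℝ, Z.IsHermitian →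
    f (eigd Y) + ((((Y - X)ᵀ * (Y - X)).trace / (2 * α) : ℝ) : EReal)
      ≤ f (eigd Z) + ((((Z - X)ᵀ * (Z - X)).trace / (2 * α) : ℝ) : EReal)}


section AuxSpectral
open Polynomial

variable {n : ℕ}

noncomputable def eigd' {X : Matrix (Fin n) (Fin n) ℝ} (h : X.IsHermitian) : Fin n → ℝ :=
  fun i => h.eigenvalues (Tuple.sort h.eigenvalues i.rev)

noncomputable def eigdPerm {X : Matrix (Fin n) (Fin n) ℝ} (h : X.IsHermitian) : Equiv.Perm (Fin n) :=
  (Fin.revPerm).trans (Tuple.sort h.eigenvalues)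

lemma eigd'_antitone {X : Matrix (Fin n) (Fin n) ℝ} (h : X.IsHermitian) :
    Antitone (eigd' h) := by
  intro i j hij
  exact Tuple.monotone_sort h.eigenvalues (Fin.rev_le_rev.2 hij)

lemma spectral_real {A : Matrix (Fin n) (Fin n) ℝ} (hA : A.IsHermitian) :
    A = hA.eigenvectorUnitary * diagonal hA.eigenvalues *
      star (hA.eigenvectorUnitary : Matrix (Fin n) (Fin n) ℝ) := by
  have := hA.spectral_theorem
  simpa using this

lemma vonNeumann {A B : Matrix (Fin n) (Fin n) ℝ} (hA : A.IsHermitian) (hB : B.IsHermitian) :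
    (A * B).trace ≤ ∑ i, eigd' hA i * eigd' hB i := by
  classical
  set a := hA.eigenvalues with ha
  set b := hB.eigenvalues with hb
  set U : Matrix (Fin n) (Fin n) ℝ := (hA.eigenvectorUnitary : Matrix (Fin n) (Fin n) ℝ) with hUdef
  set V : Matrix (Fin n) (Fin n) ℝ := (hB.eigenvectorUnitary : Matrix (Fin n) (Fin n) ℝ) with hVdef
  have hU1 : U * star U = 1 := mem_unitaryGroup_iff.1 hA.eigenvectorUnitary.2
  have hU2 : star U * U = 1 := mem_unitaryGroup_iff'.1 hA.eigenvectorUnitary.2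
  have hV1 : V * star V = 1 := mem_unitaryGroup_iff.1 hB.eigenvectorUnitary.2
  have hV2 : star V * V = 1 := mem_unitaryGroup_iff'.1 hB.eigenvectorUnitary.2
  set W : Matrix (Fin n) (Fin n) ℝ := star U * V with hWdef
  have hW1 : W * star W = 1 := by
    rw [hWdef, Matrix.star_mul, star_star]
    calc star U * V * (star V * U) = star U * (V * star V) * U := by simp only [mul_assoc]
      _ = 1 := by rw [hV1, mul_one, hU2]
  have hW2 : star W * W = 1 := by
    rw [hWdef, Matrix.star_mul, star_star]
    calc star V * U * (star U * V) = star V * (U * star U) * V := by simp only [mul_assoc]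
      _ = 1 := by rw [hU1, mul_one, hV2]
  -- trace identity
  have htr : (A * B).trace = ∑ i, ∑ j, (W i j) ^ 2 * (a i * b j) := by
    have hrw : A * B = U * (diagonal a * W * diagonal b * star W) * star U := by
      rw [spectral_real hA, spectral_real hB, ← ha, ← hb, ← hUdef, ← hVdef, hWdef]
      rw [Matrix.star_mul, star_star]
      simp only [mul_assoc]
      rw [hU1]
      simp only [mul_one]
    rw [hrw, trace_mul_cycle (A := U)]
    rw [hU2, one_mul]
    have hentry : ∀ i, (diagonal a * W * diagonal b * star W) i i
        = ∑ j, (W i j) ^ 2 * (a i * b j) := by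
      intro i
      rw [(show diagonal a * W * diagonal b * star W
          = diagonal a * ((W * diagonal b) * star W) by simp only [mul_assoc]),
        diagonal_mul, mul_apply]
      rw [Finset.mul_sum]
      refine Finset.sum_congr rfl fun j _ => ?_
      rw [mul_diagonal, star_apply, star_trivial]
      ring
    rw [Matrix.trace]
    exact Finset.sum_congr rfl fun i _ => hentry i
  -- S is doubly stochastic
  set S : Matrix (Fin n) (Fin n) ℝ := Matrix.of (fun i j => (W i j) ^ 2) with hSdef
  have hSmem : S ∈ doublyStochastic ℝ (Fin n) := by
    rw [mem_doublyStochastic_iff_sum]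
    refine ⟨fun i j => sq_nonneg _, fun i => ?_, fun j => ?_⟩
    · have h1 := congrFun (congrFun hW1 i) i
      rw [mul_apply] at h1
      simp only [one_apply_eq] at h1
      rw [← h1]
      refine Finset.sum_congr rfl fun j _ => ?_
      rw [hSdef]
      simp [star_apply, star_trivial, sq]
    · have h1 := congrFun (congrFun hW2 j) j
      rw [mul_apply] at h1
      simp only [one_apply_eq] at h1
      rw [← h1]
      refine Finset.sum_congr rfl fun i _ => ?_
      rw [hSdef]
      simp [star_apply, star_trivial, sq]
  obtain ⟨w, hw0, hw1, hwS⟩ := exists_eq_sum_perm_of_mem_doublyStochastic hSmem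
  have hform : ∑ i, ∑ j, (W i j) ^ 2 * (a i * b j)
      = ∑ σ : Equiv.Perm (Fin n), w σ * ∑ i, a i * b (σ i) := by
    have hSij : ∀ i j, (W i j) ^ 2 = ∑ σ : Equiv.Perm (Fin n),
        w σ * (σ.permMatrix ℝ) i j := by
      intro i j
      have := congrFun (congrFun hwS i) j
      rw [Matrix.sum_apply] at this
      simp only [Matrix.smul_apply, smul_eq_mul] at this
      exact this.symm
    calc ∑ i, ∑ j, (W i j) ^ 2 * (a i * b j)
        = ∑ i, ∑ j, ∑ σ : Equiv.Perm (Fin n),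
            w σ * (σ.permMatrix ℝ) i j * (a i * b j) := by
          refine Finset.sum_congr rfl fun i _ => Finset.sum_congr rfl fun j _ => ?_
          rw [hSij i j, Finset.sum_mul]
      _ = ∑ σ : Equiv.Perm (Fin n), ∑ i, ∑ j,
            w σ * (σ.permMatrix ℝ) i j * (a i * b j) := by
          rw [Finset.sum_congr rfl fun (i : Fin n) (_ : i ∈ Finset.univ) =>
            (Finset.sum_comm (s := Finset.univ) (t := Finset.univ)
              (f := fun j σ => w σ * (σ.permMatrix ℝ) i j * (a i * b j)))]
          exact Finset.sum_comm
      _ = ∑ σ : Equiv.Perm (Fin n), w σ * ∑ i, a i * b (σ i) := by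
          refine Finset.sum_congr rfl fun σ _ => ?_
          rw [Finset.mul_sum]
          refine Finset.sum_congr rfl fun i _ => ?_
          rw [Finset.sum_eq_single (σ i)]
          · simp [Equiv.Perm.permMatrix, PEquiv.toMatrix_apply, Equiv.toPEquiv_apply]
          · intro j _ hj
            simp [Equiv.Perm.permMatrix, PEquiv.toMatrix_apply, Equiv.toPEquiv_apply,
              Ne.symm hj]
          · intro h; exact absurd (Finset.mem_univ _) h
  have hre : ∀ σ : Equiv.Perm (Fin n),
      ∑ i, a i * b (σ i) ≤ ∑ i, eigd' hA i * eigd' hB i := by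
    intro σ
    set p := eigdPerm hA with hp
    set q := eigdPerm hB with hq
    have h1 : ∑ i, a i * b (σ i)
        = ∑ i, eigd' hA i * eigd' hB ((p.trans (σ.trans q.symm)) i) := by
      rw [← Equiv.sum_comp p (fun i => a i * b (σ i))]
      refine Finset.sum_congr rfl fun k _ => ?_
      have : eigd' hB ((p.trans (σ.trans q.symm)) k) = b (σ (p k)) := by
        show hB.eigenvalues (q (q.symm (σ (p k)))) = b (σ (p k))
        rw [Equiv.apply_symm_apply]
      rw [this]
      rfl
    rw [h1]
    exact Monovary.sum_mul_comp_perm_le_sum_mul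
      ((eigd'_antitone hA).monovary (eigd'_antitone hB))
  rw [htr, hform]
  calc ∑ σ : Equiv.Perm (Fin n), w σ * ∑ i, a i * b (σ i)
      ≤ ∑ σ : Equiv.Perm (Fin n), w σ * ∑ i, eigd' hA i * eigd' hB i :=
        Finset.sum_le_sum fun σ _ => mul_le_mul_of_nonneg_left (hre σ) (hw0 σ)
    _ = ∑ i, eigd' hA i * eigd' hB i := by rw [← Finset.sum_mul, hw1, one_mul]


lemma multiset_ofFn (f : Fin n → ℝ) :
    (↑(List.ofFn f) : Multiset ℝ) = Multiset.map f Finset.univ.val := by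
  rw [List.ofFn_eq_map]
  rfl

lemma multiset_map_equiv (e : Equiv.Perm (Fin n)) :
    Multiset.map (⇑e) Finset.univ.val = (Finset.univ.val : Multiset (Fin n)) := by
  have := congrArg Finset.val (Finset.univ_map_equiv_to_embedding e)
  rw [Finset.map_val] at this
  simpa using this

lemma antitone_eq_of_multiset_eq {f g : Fin n → ℝ} (hf : Antitone f) (hg : Antitone g)
    (h : Multiset.map f Finset.univ.val = Multiset.map g Finset.univ.val) : f = g := by
  have key : ∀ (u : Fin n → ℝ),
      (↑(List.ofFn (u ∘ Fin.rev)) : Multiset ℝ) = Multiset.map u Finset.univ.val := by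
    intro u
    rw [multiset_ofFn, ← Multiset.map_map]
    congr 1
    exact multiset_map_equiv Fin.revPerm
  have hperm : (List.ofFn (f ∘ Fin.rev)).Perm (List.ofFn (g ∘ Fin.rev)) := by
    rw [← Multiset.coe_eq_coe, key, key, h]
  have hs : ∀ (u : Fin n → ℝ), Antitone u → List.Pairwise (· ≤ ·) (List.ofFn (u ∘ Fin.rev)) := by
    intro u hu
    rw [List.pairwise_ofFn]
    intro i j hij
    exact hu (Fin.rev_le_rev.2 hij.le)
  have h2 : f ∘ Fin.rev = g ∘ Fin.rev :=
    List.ofFn_injective (List.Perm.eq_of_pairwise' (hs f hf) (hs g hg) hperm)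
  funext i
  have := congrFun h2 i.rev
  simpa using this


lemma charpoly_conj {U M V : Matrix (Fin n) (Fin n) ℝ} (h1 : U * V = 1) (h2 : V * U = 1) :
    (U * M * V).charpoly = M.charpoly := by
  classical
  let mC : Matrix (Fin n) (Fin n) ℝ →+* Matrix (Fin n) (Fin n) ℝ[X] := (C : ℝ →+* ℝ[X]).mapMatrix
  have hUV : (mC U) * (mC V) = 1 := by rw [← _root_.map_mul, h1, _root_.map_one]
  have hch : charmatrix (U * M * V) = mC U * charmatrix M * mC V := by
    unfold charmatrix
    show scalar (Fin n) X - mC (U * M * V) = _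
    rw [_root_.map_mul, _root_.map_mul]
    rw [Matrix.mul_sub, Matrix.sub_mul]
    congr 1
    rw [mul_assoc]
    rw [scalar_commute (X : ℝ[X]) (fun r => Commute.all _ _) (mC V)]
    rw [← mul_assoc, hUV, one_mul]
  have hdet : det (mC U) * det (mC V) = 1 := by rw [← det_mul, hUV, det_one]
  rw [Matrix.charpoly, hch, det_mul, det_mul, Matrix.charpoly]
  calc det (mC U) * det (charmatrix M) * det (mC V)
      = det (charmatrix M) * (det (mC U) * det (mC V)) := by ring
    _ = det (charmatrix M) := by rw [hdet, mul_one]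

lemma charpoly_diagonal (d : Fin n → ℝ) :
    (diagonal d).charpoly = ∏ i, (X - C (d i)) := by
  classical
  have : charmatrix (diagonal d) = diagonal (fun i => (X : ℝ[X]) - C (d i)) := by
    ext i j
    by_cases hij : i = j
    · subst hij; simp
    · simp [charmatrix_apply_ne _ _ _ hij, diagonal_apply_ne _ hij]
  rw [Matrix.charpoly, this, det_diagonal]


lemma permMatrix_transpose (σ : Equiv.Perm (Fin n)) :
    (σ.permMatrix ℝ)ᵀ = Equiv.Perm.permMatrix ℝ σ.symm := by
  ext i j
  simp only [transpose_apply, Equiv.Perm.permMatrix, PEquiv.toMatrix_apply,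
    Equiv.toPEquiv_apply, Option.mem_def, Option.some.injEq]
  by_cases h : σ j = i
  · rw [if_pos h, if_pos (by rw [← h, Equiv.symm_apply_apply])]
  · rw [if_neg h, if_neg (fun hh => h (by rw [← hh, Equiv.apply_symm_apply]))]

lemma permMatrix_mul_symm (σ : Equiv.Perm (Fin n)) :
    σ.permMatrix ℝ * Equiv.Perm.permMatrix ℝ σ.symm = 1 := by
  unfold Equiv.Perm.permMatrix
  rw [← PEquiv.toMatrix_trans, ← Equiv.toPEquiv_trans, Equiv.self_trans_symm,
    Equiv.toPEquiv_refl, PEquiv.toMatrix_refl]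

lemma permMatrix_symm_mul (σ : Equiv.Perm (Fin n)) :
    Equiv.Perm.permMatrix ℝ σ.symm * σ.permMatrix ℝ = 1 := by
  unfold Equiv.Perm.permMatrix
  rw [← PEquiv.toMatrix_trans, ← Equiv.toPEquiv_trans, Equiv.symm_trans_self,
    Equiv.toPEquiv_refl, PEquiv.toMatrix_refl]

lemma permMatrix_conj_diagonal (σ : Equiv.Perm (Fin n)) (v : Fin n → ℝ) :
    σ.permMatrix ℝ * diagonal v * Equiv.Perm.permMatrix ℝ σ.symm = diagonal (v ∘ σ) := by
  unfold Equiv.Perm.permMatrix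
  rw [PEquiv.toMatrix_toPEquiv_mul, PEquiv.mul_toMatrix_toPEquiv]
  ext i j
  by_cases h : i = j
  · subst h; simp
  · simp [diagonal_apply_ne _ h, diagonal_apply_ne, σ.injective.ne h, h]


lemma isHermitian_conj_diag {U : Matrix (Fin n) (Fin n) ℝ} (d : Fin n → ℝ) :
    (U * diagonal d * star U).IsHermitian := by
  unfold Matrix.IsHermitian
  rw [conjTranspose_mul, conjTranspose_mul, diagonal_conjTranspose]
  simp [Matrix.star_eq_conjTranspose, mul_assoc, star_trivial]

lemma trace_conj_sq {U : Matrix (Fin n) (Fin n) ℝ} (hU : U ∈ Matrix.unitaryGroup (Fin n) ℝ)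
    (d : Fin n → ℝ) :
    ((U * diagonal d * star U)ᵀ * (U * diagonal d * star U)).trace = ∑ i, d i ^ 2 := by
  have h1 : star U * U = 1 := mem_unitaryGroup_iff'.1 hU
  have hM : (U * diagonal d * star U)ᵀ = U * diagonal d * star U := by
    have := isHermitian_conj_diag (U := U) d
    rw [Matrix.IsHermitian, conjTranspose_eq_transpose_of_trivial] at this
    exact this
  rw [hM]
  have : U * diagonal d * star U * (U * diagonal d * star U)
      = U * (diagonal d * diagonal d) * star U := by
    calc U * diagonal d * star U * (U * diagonal d * star U)
        = U * (diagonal d * ((star U * U) * (diagonal d * star U))) := by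
          simp only [mul_assoc]
      _ = U * (diagonal d * diagonal d) * star U := by
          rw [h1, one_mul]; simp only [mul_assoc]
  rw [this, diagonal_mul_diagonal]
  rw [trace_mul_cycle, h1, one_mul, trace_diagonal]
  exact Finset.sum_congr rfl fun i _ => (sq (d i)).symm

lemma sum_comp_eigd' {X : Matrix (Fin n) (Fin n) ℝ} (h : X.IsHermitian) (g : ℝ → ℝ) :
    ∑ i, g (eigd' h i) = ∑ i, g (h.eigenvalues i) :=
  Equiv.sum_comp (eigdPerm h) (fun i => g (h.eigenvalues i))

lemma multiset_eigd' {X : Matrix (Fin n) (Fin n) ℝ} (h : X.IsHermitian) :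
    Multiset.map (eigd' h) Finset.univ.val = Multiset.map h.eigenvalues Finset.univ.val := by
  have h2 : eigd' h = h.eigenvalues ∘ (eigdPerm h) := rfl
  rw [h2, ← Multiset.map_map]
  congr 1
  exact multiset_map_equiv (eigdPerm h)

lemma trace_transpose_sq {A : Matrix (Fin n) (Fin n) ℝ} (hA : A.IsHermitian) :
    (Aᵀ * A).trace = ∑ i, eigd' hA i ^ 2 := by
  rw [sum_comp_eigd' hA (fun t => t ^ 2)]
  conv_lhs => rw [spectral_real hA]
  exact trace_conj_sq hA.eigenvectorUnitary.2 hA.eigenvalues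

lemma charpoly_unitary_diag {U : Matrix (Fin n) (Fin n) ℝ}
    (hU : U ∈ Matrix.unitaryGroup (Fin n) ℝ) (d : Fin n → ℝ) :
    (U * diagonal d * star U).charpoly
      = ((Finset.univ.val.map d).map (fun a => X - C a)).prod := by
  rw [charpoly_conj (mem_unitaryGroup_iff.1 hU) (mem_unitaryGroup_iff'.1 hU),
    charpoly_diagonal, Finset.prod_eq_multiset_prod, Multiset.map_map]
  rfl

lemma multiset_eigenvalues_conj {U : Matrix (Fin n) (Fin n) ℝ}
    (hU : U ∈ Matrix.unitaryGroup (Fin n) ℝ) (d : Fin n → ℝ)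
    (hY : (U * diagonal d * star U).IsHermitian) :
    Multiset.map hY.eigenvalues Finset.univ.val = Finset.univ.val.map d := by
  have h1 := charpoly_unitary_diag hU d
  have h2 : (U * diagonal d * star U).charpoly
      = ((Finset.univ.val.map hY.eigenvalues).map (fun a => X - C a)).prod := by
    conv_lhs => rw [spectral_real hY]
    exact charpoly_unitary_diag hY.eigenvectorUnitary.2 hY.eigenvalues
  have h3 := h2.symm.trans h1
  have hroots := congrArg Polynomial.roots h3
  rwa [Polynomial.roots_multiset_prod_X_sub_C, Polynomial.roots_multiset_prod_X_sub_C] at hroots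

lemma eigd'_conj {U : Matrix (Fin n) (Fin n) ℝ}
    (hU : U ∈ Matrix.unitaryGroup (Fin n) ℝ) {d : Fin n → ℝ} (hd : Antitone d)
    (hY : (U * diagonal d * star U).IsHermitian) :
    eigd' hY = d := by
  refine antitone_eq_of_multiset_eq (eigd'_antitone hY) hd ?_
  rw [multiset_eigd' hY]
  exact multiset_eigenvalues_conj hU d hY

lemma exists_unitary_diag {A : Matrix (Fin n) (Fin n) ℝ} (hA : A.IsHermitian) :
    ∃ U ∈ Matrix.unitaryGroup (Fin n) ℝ, A = U * diagonal (eigd' hA) * star U := by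
  classical
  set σ := eigdPerm hA with hσ
  set U0 : Matrix (Fin n) (Fin n) ℝ := (hA.eigenvectorUnitary : Matrix (Fin n) (Fin n) ℝ)
  have hU01 : U0 * star U0 = 1 := mem_unitaryGroup_iff.1 hA.eigenvectorUnitary.2
  have hU02 : star U0 * U0 = 1 := mem_unitaryGroup_iff'.1 hA.eigenvectorUnitary.2
  set P : Matrix (Fin n) (Fin n) ℝ := σ.permMatrix ℝ with hP
  set Q : Matrix (Fin n) (Fin n) ℝ := Equiv.Perm.permMatrix ℝ σ.symm with hQ
  have hPQ : P * Q = 1 := permMatrix_mul_symm σ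
  have hQP : Q * P = 1 := permMatrix_symm_mul σ
  have hQt : star Q = P := by
    rw [hQ, Matrix.star_eq_conjTranspose, conjTranspose_eq_transpose_of_trivial,
      permMatrix_transpose, Equiv.symm_symm]
  have hdiag : P * diagonal hA.eigenvalues * Q = diagonal (eigd' hA) := by
    have h4 : eigd' hA = hA.eigenvalues ∘ σ := rfl
    rw [h4, hP, hQ]
    exact permMatrix_conj_diagonal σ hA.eigenvalues
  have hdiag2 : diagonal hA.eigenvalues = Q * diagonal (eigd' hA) * P := by
    rw [← hdiag]
    symm
    calc Q * (P * diagonal hA.eigenvalues * Q) * P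
        = (Q * P) * (diagonal hA.eigenvalues * (Q * P)) := by simp only [mul_assoc]
      _ = diagonal hA.eigenvalues := by rw [hQP, one_mul, mul_one]
  refine ⟨U0 * Q, ?_, ?_⟩
  · rw [mem_unitaryGroup_iff, Matrix.star_mul, hQt]
    calc U0 * Q * (P * star U0) = U0 * (Q * P) * star U0 := by simp only [mul_assoc]
      _ = 1 := by rw [hQP, mul_one, hU01]
  · rw [Matrix.star_mul, hQt]
    calc A = U0 * diagonal hA.eigenvalues * star U0 := spectral_real hA
      _ = U0 * (Q * diagonal (eigd' hA) * P) * star U0 := by rw [← hdiag2]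
      _ = U0 * Q * diagonal (eigd' hA) * (P * star U0) := by simp only [mul_assoc]

lemma sq_expand (u v : Fin n → ℝ) :
    ∑ i, (u i - v i) ^ 2 = ∑ i, u i ^ 2 + ∑ i, v i ^ 2 - 2 * ∑ i, v i * u i := by
  rw [Finset.sum_congr rfl (fun i (_ : i ∈ Finset.univ) =>
    (by ring : (u i - v i) ^ 2 = (u i ^ 2 + v i ^ 2) - 2 * (v i * u i)))]
  rw [Finset.sum_sub_distrib, Finset.sum_add_distrib, ← Finset.mul_sum]

lemma eig_dist {A B : Matrix (Fin n) (Fin n) ℝ} (hA : A.IsHermitian) (hB : B.IsHermitian) :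
    ∑ i, (eigd' hB i - eigd' hA i) ^ 2 ≤ ((B - A)ᵀ * (B - A)).trace := by
  have hAt : Aᵀ = A := by
    rw [← conjTranspose_eq_transpose_of_trivial]; exact hA
  have hBt : Bᵀ = B := by
    rw [← conjTranspose_eq_transpose_of_trivial]; exact hB
  have ht : ((B - A)ᵀ * (B - A)).trace
      = (Bᵀ * B).trace + (Aᵀ * A).trace - 2 * (A * B).trace := by
    rw [transpose_sub, hAt, hBt]
    rw [Matrix.sub_mul, Matrix.mul_sub, Matrix.mul_sub]
    rw [trace_sub, trace_sub, trace_sub]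
    rw [trace_mul_comm B A]
    ring
  rw [ht, trace_transpose_sq hA, trace_transpose_sq hB, sq_expand]
  have hvn := vonNeumann hA hB
  linarith

lemma eigd_eq_eigd' {X : Matrix (Fin n) (Fin n) ℝ} (h : X.IsHermitian) :
    eigd X = eigd' h := by
  rw [eigd, dif_pos h]
  rfl

theorem statement9' (f : (Fin n → ℝ) → EReal) (hsym : IsSymmFn f)
    (α : ℝ) (hα : 0 < α) (X : Matrix (Fin n) (Fin n) ℝ) (hX : X.IsHermitian) :
    mEnvS f α X = mEnvV f α (eigd X) := by
  classical
  have hlam : eigd X = eigd' hX := eigd_eq_eigd' hX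
  have hlamanti : Antitone (eigd X) := by rw [hlam]; exact eigd'_antitone hX
  apply le_antisymm
  · rw [mEnvV]
    refine le_iInf fun y => ?_
    obtain ⟨U, hU, hXU⟩ := exists_unitary_diag hX
    set π : Equiv.Perm (Fin n) := (Fin.revPerm (n := n)).trans (Tuple.sort y) with hπ
    set y' : Fin n → ℝ := fun i => y (π i) with hy'
    have hy'anti : Antitone y' := fun i j hij => Tuple.monotone_sort y (Fin.rev_le_rev.2 hij)
    have hYh : (U * diagonal y' * star U).IsHermitian := isHermitian_conj_diag y'
    have h1 : eigd (U * diagonal y' * star U) = y' := by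
      rw [eigd_eq_eigd' hYh]
      exact eigd'_conj hU hy'anti hYh
    have h2 : ((U * diagonal y' * star U - X)ᵀ * (U * diagonal y' * star U - X)).trace
        = ∑ i, (y' i - eigd X i) ^ 2 := by
      have hdd : diagonal (fun i => y' i - eigd X i)
          = diagonal y' - diagonal (eigd' hX) := by
        ext i j
        by_cases h : i = j
        · subst h; simp [hlam]
        · simp [diagonal_apply_ne _ h]
      have hd : U * diagonal y' * star U - X
          = U * diagonal (fun i => y' i - eigd X i) * star U := by
        conv_lhs => rw [hXU]
        rw [hdd, Matrix.mul_sub, Matrix.sub_mul]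
      rw [hd]
      exact trace_conj_sq hU _
    calc mEnvS f α X
        ≤ f (eigd (U * diagonal y' * star U))
          + ((((U * diagonal y' * star U - X)ᵀ
              * (U * diagonal y' * star U - X)).trace / (2 * α) : ℝ) : EReal) := by
          rw [mEnvS]
          exact iInf_le _ (⟨U * diagonal y' * star U, hYh⟩ :
            {Y : Matrix (Fin n) (Fin n) ℝ // Y.IsHermitian})
      _ = f y + (((∑ i, (y' i - eigd X i) ^ 2) / (2 * α) : ℝ) : EReal) := by
          rw [h1, h2]
          congr 1
          exact hsym π y
      _ ≤ f y + (((∑ i, (y i - eigd X i) ^ 2) / (2 * α) : ℝ) : EReal) := by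
          refine add_le_add_right (EReal.coe_le_coe_iff.2 ?_) _
          refine div_le_div_of_nonneg_right ?_ (by linarith)
          rw [sq_expand y' (eigd X), sq_expand y (eigd X)]
          have e1 : ∑ i, y' i ^ 2 = ∑ i, y i ^ 2 :=
            Equiv.sum_comp π (fun i => y i ^ 2)
          have e2 : ∑ i, eigd X i * y i ≤ ∑ i, eigd X i * y' i := by
            have h3 : ∑ i, eigd X i * y i = ∑ i, eigd X i * y' (π.symm i) := by
              refine Finset.sum_congr rfl fun i _ => ?_
              congr 1
              rw [hy']
              simp
            rw [h3]
            exact Monovary.sum_mul_comp_perm_le_sum_mul (hlamanti.monovary hy'anti)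
          linarith
  · rw [mEnvS]
    refine le_iInf fun Yp => ?_
    obtain ⟨Y, hY⟩ := Yp
    calc mEnvV f α (eigd X)
        ≤ f (eigd Y) + (((∑ i, (eigd Y i - eigd X i) ^ 2) / (2 * α) : ℝ) : EReal) := by
          rw [mEnvV]
          exact iInf_le _ (eigd Y)
      _ ≤ f (eigd Y) + ((((Y - X)ᵀ * (Y - X)).trace / (2 * α) : ℝ) : EReal) := by
          refine add_le_add_right (EReal.coe_le_coe_iff.2 ?_) _
          refine div_le_div_of_nonneg_right ?_ (by linarith)
          rw [hlam, eigd_eq_eigd' hY]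
          exact eig_dist hX hY

end AuxSpectral

/-- For a symmetric `f : ℝⁿ → ℝ ∪ {+∞}`, `α > 0` and a symmetric matrix `X`,
the Moreau envelope satisfies `(f∘λ)_α(X) = f_α(λ(X))`. -/
theorem statement9 {n : ℕ} (f : (Fin n → ℝ) → EReal) (hsym : IsSymmFn f)
    (α : ℝ) (hα : 0 < α) (X : Matrix (Fin n) (Fin n) ℝ) (hX : X.IsHermitian) :
    mEnvS f α X = mEnvV f α (eigd X) := by
  exact statement9' f hsym α hα X hX
end

section
/- Let f : ℝⁿ → ℝ∪{+∞} be lower semicontinuous, symmetric, and lower-bounded, and let X ∈ Sⁿ with f(λ(X)) finite. If v ∈ ℝⁿ is a Fréchet subgradient of f at λ(X) and U is orthogonal with U(Diag λ(X))Uᵀ = X, then V := U(Diag v)Uᵀ is a Fréchet subgradient of f∘λ at X. -/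
open Matrix

/-- Fréchet subgradient of `f : ℝⁿ → ℝ ∪ {+∞}` at `x` (Euclidean structure):
`f(y) ≥ f(x) + ⟨v, y−x⟩ + o(‖y−x‖)`. -/
def FSubV {n : ℕ} (f : (Fin n → ℝ) → EReal) (x v : Fin n → ℝ) : Prop :=
  ∀ ε : ℝ, 0 < ε → ∃ δ : ℝ, 0 < δ ∧ ∀ y : Fin n → ℝ,
    Real.sqrt (∑ i, (y i - x i) ^ 2) ≤ δ →
    f x + (((∑ i, v i * (y i - x i)) - ε * Real.sqrt (∑ i, (y i - x i) ^ 2) : ℝ) : EReal)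
      ≤ f y

/-- Fréchet subgradient of a function on the symmetric matrices at a symmetric matrix
`X`, with respect to the trace inner product and the Frobenius norm. -/
def FSubM {n : ℕ} (F : Matrix (Fin n) (Fin n) ℝ → EReal)
    (X V : Matrix (Fin n) (Fin n) ℝ) : Prop :=
  ∀ ε : ℝ, 0 < ε → ∃ δ : ℝ, 0 < δ ∧ ∀ Y : Matrix (Fin n) (Fin n) ℝ, Y.IsHermitian →
    Real.sqrt (((Y - X)ᵀ * (Y - X)).trace) ≤ δ →
    F X + (((V * (Y - X)).trace - ε * Real.sqrt (((Y - X)ᵀ * (Y - X)).trace) : ℝ) : EReal)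
      ≤ F Y

section Aux

open Finset

lemma eigd_antitone' {n : ℕ} {X : Matrix (Fin n) (Fin n) ℝ} (hX : X.IsHermitian) :
    Antitone (eigd X) := by
  intro i j hij
  rw [eigd, dif_pos hX]
  exact Tuple.monotone_sort hX.eigenvalues (Fin.rev_le_rev.mpr hij)

lemma eigd_spectral' {n : ℕ} {Y : Matrix (Fin n) (Fin n) ℝ} (hY : Y.IsHermitian) :
    ∃ W : Matrix (Fin n) (Fin n) ℝ, W * Wᵀ = 1 ∧ Wᵀ * W = 1 ∧
      Y = W * Matrix.diagonal (eigd Y) * Wᵀ := by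
  classical
  set V : Matrix (Fin n) (Fin n) ℝ := (hY.eigenvectorUnitary : Matrix (Fin n) (Fin n) ℝ)
  have hV1 : V * Vᵀ = 1 := by
    have := (Matrix.mem_unitaryGroup_iff).mp hY.eigenvectorUnitary.2
    simpa [Matrix.star_eq_conjTranspose, Matrix.conjTranspose_eq_transpose_of_trivial] using this
  have hV2 : Vᵀ * V = 1 := mul_eq_one_comm.mp hV1
  have hspec : Y = V * Matrix.diagonal hY.eigenvalues * Vᵀ := by
    have := hY.spectral_theorem
    simpa [Matrix.star_eq_conjTranspose, Matrix.conjTranspose_eq_transpose_of_trivial,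
      Function.comp] using this
  set e : Fin n ≃ Fin n := Fin.revPerm.trans (Tuple.sort hY.eigenvalues) with he
  have heig : eigd Y = hY.eigenvalues ∘ e := by
    funext i
    rw [eigd, dif_pos hY]
    rfl
  refine ⟨V.submatrix id ⇑e, ?_, ?_, ?_⟩
  · have : (V.submatrix id ⇑e) * (V.submatrix id ⇑e)ᵀ
        = V * Vᵀ := by
      rw [Matrix.transpose_submatrix]
      rw [show Vᵀ.submatrix ⇑e id = Vᵀ.submatrix ⇑e ⇑(Equiv.refl (Fin n)) from rfl]
      rw [show V.submatrix id ⇑e = V.submatrix ⇑(Equiv.refl (Fin n)) ⇑e from rfl]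
      rw [Matrix.submatrix_mul_equiv]
      simp
    rw [this, hV1]
  · have : (V.submatrix id ⇑e)ᵀ * (V.submatrix id ⇑e)
        = (Vᵀ * V).submatrix ⇑e ⇑e := by
      rw [Matrix.transpose_submatrix]
      rw [show V.submatrix id ⇑e = V.submatrix ⇑(Equiv.refl (Fin n)) ⇑e from rfl]
      rw [show Vᵀ.submatrix ⇑e id = Vᵀ.submatrix ⇑e ⇑(Equiv.refl (Fin n)) from rfl]
      rw [Matrix.submatrix_mul_equiv]
    rw [this, hV2]
    ext i j
    simp [Matrix.one_apply, EmbeddingLike.apply_eq_iff_eq]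
  · rw [heig]
    have hdiag : Matrix.diagonal (hY.eigenvalues ∘ ⇑e)
        = (Matrix.diagonal hY.eigenvalues).submatrix ⇑e ⇑e :=
      (Matrix.submatrix_diagonal_equiv hY.eigenvalues e).symm
    rw [hdiag, Matrix.transpose_submatrix]
    rw [show V.submatrix id ⇑e = V.submatrix ⇑(Equiv.refl (Fin n)) ⇑e from rfl]
    rw [show Vᵀ.submatrix ⇑e id = Vᵀ.submatrix ⇑e ⇑(Equiv.refl (Fin n)) from rfl]
    rw [Matrix.submatrix_mul_equiv, Matrix.submatrix_mul_equiv]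
    simpa using hspec

lemma ext_perm_aux' {n : ℕ} (x : Fin n → ℝ) :
    ∀ (N : ℕ) (p : Equiv.Perm (Fin n)), #{i | x (p i) ≠ x i} ≤ N →
    ∃ π : Equiv.Perm (Fin n), (∀ i, x (π i) = x i) ∧ ∀ i, x (p i) = x i → π i = p i := by
  intro N
  induction N with
  | zero =>
    intro p hp
    refine ⟨p, fun i => ?_, fun i _ => rfl⟩
    by_contra h
    have : i ∈ ({i | x (p i) ≠ x i} : Finset (Fin n)) := by simpa using h
    have := card_pos.mpr ⟨i, this⟩
    omega
  | succ N ih =>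
    intro p hp
    by_cases hB : ({i | x (p i) ≠ x i} : Finset (Fin n)) = ∅
    · refine ⟨p, fun i => ?_, fun i _ => rfl⟩
      by_contra h
      have : i ∈ ({i | x (p i) ≠ x i} : Finset (Fin n)) := by simpa using h
      simp [hB] at this
    · obtain ⟨i₀, hi₀⟩ := nonempty_iff_ne_empty.mpr hB
      simp only [mem_filter, mem_univ, true_and, ne_eq] at hi₀
      set c : ℝ := x (p i₀) with hc
      have hcard : #({j | x j = c} : Finset (Fin n)) = #({j | x (p j) = c} : Finset (Fin n)) := by
        have himg : ({j | x (p j) = c} : Finset (Fin n)).image p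
            = ({j | x j = c} : Finset (Fin n)) := by
          ext k
          simp only [mem_image, mem_filter, mem_univ, true_and]
          constructor
          · rintro ⟨a, ha, rfl⟩; exact ha
          · intro hk; exact ⟨p.symm k, by simpa using hk, by simp⟩
        rw [← himg, card_image_of_injective _ p.injective]
      have : ¬ (({j | x j = c} : Finset (Fin n)) ⊆ ({j | x (p j) = c} : Finset (Fin n))) := by
        intro hsub
        have heq := Finset.eq_of_subset_of_card_le hsub (le_of_eq hcard.symm)
        have : i₀ ∈ ({j | x j = c} : Finset (Fin n)) := by
          rw [heq]; simp [hc]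
        simp only [mem_filter, mem_univ, true_and] at this
        exact hi₀ this.symm
      obtain ⟨j, hj, hj'⟩ := not_subset.mp this
      simp only [mem_filter, mem_univ, true_and] at hj hj'
      set p' : Equiv.Perm (Fin n) := p * Equiv.swap i₀ j with hp'
      have hij : i₀ ≠ j := by rintro rfl; exact hi₀ hj.symm
      have hBad' : ({i | x (p' i) ≠ x i} : Finset (Fin n)) ⊆
          ({i | x (p i) ≠ x i} : Finset (Fin n)).erase j := by
        intro k hk
        simp only [mem_filter, mem_univ, true_and, ne_eq] at hk
        rw [mem_erase]
        constructor
        · rintro rfl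
          apply hk
          simp only [hp', Equiv.Perm.mul_apply, Equiv.swap_apply_right]
          rw [← hc, hj]
        · simp only [mem_filter, mem_univ, true_and, ne_eq]
          intro hgood
          apply hk
          by_cases h1 : k = i₀
          · subst h1
            simp only [hp', Equiv.Perm.mul_apply, Equiv.swap_apply_left]
            exact False.elim (hi₀ hgood)
          · rcases eq_or_ne k j with rfl | h2
            · exact False.elim (hk (by
                simp only [hp', Equiv.Perm.mul_apply, Equiv.swap_apply_right]
                rw [← hc, hj]))
            · simp only [hp', Equiv.Perm.mul_apply, Equiv.swap_apply_of_ne_of_ne h1 h2]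
              exact hgood
      have hle : #({i | x (p' i) ≠ x i} : Finset (Fin n)) ≤ N := by
        have h1 := Finset.card_le_card hBad'
        have h2 : j ∈ ({i | x (p i) ≠ x i} : Finset (Fin n)) := by
          simp only [mem_filter, mem_univ, true_and, ne_eq]
          rw [hj]; exact hj'
        have h3 := Finset.card_erase_of_mem h2
        omega
      obtain ⟨π, hπ1, hπ2⟩ := ih p' hle
      refine ⟨π, hπ1, fun k hk => ?_⟩
      have hknei : k ≠ i₀ := by rintro rfl; exact hi₀ hk
      have hknej : k ≠ j := by
        rintro rfl
        rw [hj] at hk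
        exact hj' hk
      have hp'k : p' k = p k := by
        simp [hp', Equiv.swap_apply_of_ne_of_ne hknei hknej]
      rw [← hp'k]
      exact hπ2 k (by rw [hp'k]; exact hk)

lemma ext_perm' {n : ℕ} (x : Fin n → ℝ) (p : Equiv.Perm (Fin n)) :
    ∃ π : Equiv.Perm (Fin n), (∀ i, x (π i) = x i) ∧ ∀ i, x (p i) = x i → π i = p i :=
  ext_perm_aux' x _ p le_rfl

lemma ds_le' {n : ℕ} {s : Matrix (Fin n) (Fin n) ℝ} (hs : s ∈ doublyStochastic ℝ (Fin n))
    (c : Fin n → Fin n → ℝ) (b : ℝ) (hb : ∀ p : Equiv.Perm (Fin n), ∑ i, c i (p i) ≤ b) :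
    ∑ i, ∑ j, c i j * s i j ≤ b := by
  obtain ⟨w, hw0, hw1, hws⟩ := exists_eq_sum_perm_of_mem_doublyStochastic hs
  have hentry : ∀ i j, s i j = ∑ σ : Equiv.Perm (Fin n), (if j = σ i then w σ else 0) := by
    intro i j
    rw [← hws]
    simp [Matrix.sum_apply, Equiv.toPEquiv_apply, Equiv.Perm.permMatrix, PEquiv.toMatrix_apply,
      mul_ite, mul_one, mul_zero]
    exact Finset.sum_congr rfl fun σ _ => if_congr eq_comm rfl rfl
  have hrow : ∀ i, ∑ j, c i j * s i j = ∑ σ : Equiv.Perm (Fin n), c i (σ i) * w σ := by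
    intro i
    simp_rw [hentry i, Finset.mul_sum, mul_ite, mul_zero]
    rw [Finset.sum_comm]
    refine Finset.sum_congr rfl fun σ _ => ?_
    simp
  calc ∑ i, ∑ j, c i j * s i j
      = ∑ σ : Equiv.Perm (Fin n), w σ * ∑ i, c i (σ i) := by
        simp_rw [hrow]
        rw [Finset.sum_comm]
        refine Finset.sum_congr rfl fun σ _ => ?_
        rw [Finset.mul_sum]
        refine Finset.sum_congr rfl fun i _ => by ring
    _ ≤ ∑ σ : Equiv.Perm (Fin n), w σ * b := by
        refine Finset.sum_le_sum fun σ _ => mul_le_mul_of_nonneg_left (hb σ) (hw0 σ)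
    _ = b := by rw [← Finset.sum_mul, hw1, one_mul]

lemma monovary_of_antitone' {n : ℕ} (x μ : Fin n → ℝ) (hx : Antitone x) (hμ : Antitone μ) :
    Monovary x μ := by
  intro i j h
  rcases le_total i j with hle | hle
  · exact absurd (hμ hle) (not_le.mpr h)
  · exact hx hle

lemma sq_sum_le' {n : ℕ} (x μ : Fin n → ℝ) (hx : Antitone x) (hμ : Antitone μ)
    (p : Equiv.Perm (Fin n)) :
    ∑ i, (x i - μ i) ^ 2 ≤ ∑ i, (x i - μ (p i)) ^ 2 := by
  have h1 : ∑ i, x i * μ (p i) ≤ ∑ i, x i * μ i :=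
    (monovary_of_antitone' x μ hx hμ).sum_mul_comp_perm_le_sum_mul
  have h2 : ∑ i, μ (p i) ^ 2 = ∑ i, μ i ^ 2 := Equiv.sum_comp p fun i => μ i ^ 2
  have e1 : ∀ i : Fin n, (x i - μ i)^2 = x i ^2 - 2 * (x i * μ i) + μ i ^2 := fun i => by ring
  have e2 : ∀ i : Fin n, (x i - μ (p i))^2 = x i ^2 - 2 * (x i * μ (p i)) + μ (p i) ^2 :=
    fun i => by ring
  simp_rw [e1, e2, Finset.sum_add_distrib, Finset.sum_sub_distrib, ← Finset.mul_sum]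
  linarith

lemma master' {n : ℕ} (x v : Fin n → ℝ) (hx : Antitone x) :
    ∃ K : ℝ, 0 < K ∧ ∀ (μ : Fin n → ℝ), Antitone μ → ∀ p : Equiv.Perm (Fin n),
    ∃ π : Equiv.Perm (Fin n), (∀ i, x (π i) = x i) ∧
      ∑ i, v i * μ (p i) ≤ ∑ i, v i * μ (π i) + K * ∑ i, (x i - μ (p i)) ^ 2 := by
  classical
  set M : ℝ := ∑ i, |v i| with hM
  have hM0 : 0 ≤ M := Finset.sum_nonneg fun i _ => abs_nonneg _
  have hMi : ∀ i, |v i| ≤ M := fun i =>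
    Finset.single_le_sum (fun j _ => abs_nonneg (v j)) (Finset.mem_univ i)
  by_cases hconst : ∀ i j, x i = x j
  · refine ⟨1, one_pos, fun μ hμ p => ⟨p, fun i => hconst (p i) i, ?_⟩⟩
    have : 0 ≤ ∑ i, (x i - μ (p i)) ^ 2 := Finset.sum_nonneg fun i _ => sq_nonneg _
    linarith
  · push_neg at hconst
    set P : Finset (Fin n × Fin n) := {q | x q.1 ≠ x q.2} with hP
    have hPne : P.Nonempty := by
      obtain ⟨i, j, hij⟩ := hconst
      exact ⟨(i, j), Finset.mem_filter.mpr ⟨Finset.mem_univ _, hij⟩⟩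
    set γ : ℝ := P.inf' hPne (fun q => |x q.1 - x q.2|) with hγ
    have hγpos : 0 < γ := by
      rw [hγ, Finset.lt_inf'_iff]
      intro q hq
      simp only [hP, Finset.mem_filter, Finset.mem_univ, true_and, ne_eq] at hq
      exact abs_pos.mpr (sub_ne_zero.mpr hq)
    have hγle : ∀ i j, x i ≠ x j → γ ≤ |x i - x j| := by
      intro i j hij
      exact Finset.inf'_le (fun q => |x q.1 - x q.2|)
        (show (i, j) ∈ P from Finset.mem_filter.mpr ⟨Finset.mem_univ _, hij⟩)
    refine ⟨8 * (M + 1) / γ + 1, by positivity, fun μ hμ p => ?_⟩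
    set K : ℝ := 8 * (M + 1) / γ + 1 with hK
    have hKM : 8 * M / γ ≤ K := by
      have h1 : 8 * M / γ ≤ 8 * (M + 1) / γ := by gcongr; linarith
      linarith
    set d2 : ℝ := ∑ i, (x i - μ (p i)) ^ 2 with hd2
    have hd2nn : 0 ≤ d2 := Finset.sum_nonneg fun i _ => sq_nonneg _
    set d : ℝ := Real.sqrt d2 with hd
    have hdnn : 0 ≤ d := Real.sqrt_nonneg _
    have hdsq : d ^ 2 = d2 := Real.sq_sqrt hd2nn
    have hpointp : ∀ i, |x i - μ (p i)| ≤ d := by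
      intro i
      rw [hd, ← Real.sqrt_sq_eq_abs]
      apply Real.sqrt_le_sqrt
      exact Finset.single_le_sum (fun j (_ : j ∈ Finset.univ) => sq_nonneg (x j - μ (p j)))
        (Finset.mem_univ i)
    have hpoint : ∀ i, |x i - μ i| ≤ d := by
      intro i
      rw [hd, ← Real.sqrt_sq_eq_abs]
      apply Real.sqrt_le_sqrt
      calc (x i - μ i)^2 ≤ ∑ j, (x j - μ j) ^ 2 :=
            Finset.single_le_sum (fun j (_ : j ∈ Finset.univ) => sq_nonneg (x j - μ j))
              (Finset.mem_univ i)
        _ ≤ d2 := sq_sum_le' x μ hx hμ p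
    by_cases hcase : γ / 4 ≤ d
    · refine ⟨1, fun i => rfl, ?_⟩
      have hterm : ∀ i, v i * μ (p i) - v i * μ i ≤ |v i| * (2 * d) := by
        intro i
        calc v i * μ (p i) - v i * μ i = v i * (μ (p i) - μ i) := by ring
          _ ≤ |v i * (μ (p i) - μ i)| := le_abs_self _
          _ = |v i| * |μ (p i) - μ i| := abs_mul _ _
          _ ≤ |v i| * (2 * d) := by
              apply mul_le_mul_of_nonneg_left ?_ (abs_nonneg _)
              calc |μ (p i) - μ i| ≤ |μ (p i) - x i| + |x i - μ i| := abs_sub_le _ _ _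
                _ = |x i - μ (p i)| + |x i - μ i| := by rw [abs_sub_comm]
                _ ≤ d + d := add_le_add (hpointp i) (hpoint i)
                _ = 2 * d := by ring
      have hsum : ∑ i, v i * μ (p i) - ∑ i, v i * μ i ≤ M * (2 * d) := by
        rw [← Finset.sum_sub_distrib, hM, Finset.sum_mul]
        exact Finset.sum_le_sum fun i _ => hterm i
      have hfin : M * (2 * d) ≤ K * d2 := by
        have h1 : M * (2 * d) = (8 * M / γ) * ((γ / 4) * d) := by
          field_simp; ring
        have h2 : (8 * M / γ) * ((γ / 4) * d) ≤ (8 * M / γ) * (d * d) := by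
          apply mul_le_mul_of_nonneg_left ?_ (by positivity)
          exact mul_le_mul_of_nonneg_right hcase hdnn
        have h3 : d * d = d2 := by rw [← hdsq]; ring
        have h4 : (8 * M / γ) * d2 ≤ K * d2 := mul_le_mul_of_nonneg_right hKM hd2nn
        calc M * (2 * d) = (8 * M / γ) * ((γ / 4) * d) := h1
          _ ≤ (8 * M / γ) * (d * d) := h2
          _ = (8 * M / γ) * d2 := by rw [h3]
          _ ≤ K * d2 := h4
      have : ∑ i, v i * μ ((1 : Equiv.Perm (Fin n)) i) = ∑ i, v i * μ i := by simp
      rw [this]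
      linarith
    · push_neg at hcase
      obtain ⟨π, hπ1, hπ2⟩ := ext_perm' x p
      refine ⟨π, hπ1, ?_⟩
      have hterm : ∀ i, v i * μ (p i) - v i * μ (π i) ≤ K * (x i - μ (p i)) ^ 2 := by
        intro i
        by_cases hgood : x (p i) = x i
        · rw [hπ2 i hgood]
          have h0 := sq_nonneg (x i - μ (p i))
          have hK0 : (0:ℝ) ≤ K := by rw [hK]; positivity
          nlinarith
        · have hgap : γ ≤ |x (p i) - x i| := hγle _ _ hgood
          have h1 : |μ (p i) - x (p i)| ≤ d := by rw [abs_sub_comm]; exact hpoint (p i)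
          have hbig : 3 * γ / 4 ≤ |x i - μ (p i)| := by
            have : |x (p i) - x i| ≤ |x (p i) - μ (p i)| + |μ (p i) - x i| := abs_sub_le _ _ _
            rw [abs_sub_comm (x (p i)) (μ (p i))] at this
            rw [abs_sub_comm (μ (p i)) (x i)] at this
            have := hcase
            linarith [h1, hgap]
          have h2 : |x i - μ (π i)| ≤ d := by
            rw [show x i = x (π i) from (hπ1 i).symm]
            exact hpoint (π i)
          have h3 : |μ (p i) - μ (π i)| ≤ (4 / 3) * |x i - μ (p i)| := by
            calc |μ (p i) - μ (π i)| ≤ |μ (p i) - x i| + |x i - μ (π i)| := abs_sub_le _ _ _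
              _ = |x i - μ (p i)| + |x i - μ (π i)| := by rw [abs_sub_comm (μ (p i)) (x i)]
              _ ≤ |x i - μ (p i)| + d := by linarith [h2]
              _ ≤ |x i - μ (p i)| + γ / 4 := by linarith [hcase]
              _ ≤ |x i - μ (p i)| + (1/3) * |x i - μ (p i)| := by linarith [hbig]
              _ = (4 / 3) * |x i - μ (p i)| := by ring
          have h4' : 3 * γ * |x i - μ (p i)| ≤ 4 * (x i - μ (p i)) ^ 2 := by
            nlinarith [hbig, abs_nonneg (x i - μ (p i)), sq_abs (x i - μ (p i)),
              mul_nonneg (sub_nonneg.mpr hbig) (abs_nonneg (x i - μ (p i)))]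
          have h4 : |x i - μ (p i)| ≤ (4 / (3 * γ)) * (x i - μ (p i)) ^ 2 := by
            rw [show (4 / (3 * γ)) * (x i - μ (p i)) ^ 2
                = 4 * (x i - μ (p i)) ^ 2 / (3 * γ) by ring,
              le_div_iff₀ (by positivity : (0:ℝ) < 3 * γ)]
            linarith
          calc v i * μ (p i) - v i * μ (π i) = v i * (μ (p i) - μ (π i)) := by ring
            _ ≤ |v i| * |μ (p i) - μ (π i)| := by
                rw [← abs_mul]; exact le_abs_self _
            _ ≤ M * ((4 / 3) * |x i - μ (p i)|) := by
                apply mul_le_mul (hMi i) h3 (abs_nonneg _) hM0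
            _ ≤ M * ((4 / 3) * ((4 / (3 * γ)) * (x i - μ (p i)) ^ 2)) := by
                apply mul_le_mul_of_nonneg_left ?_ hM0
                apply mul_le_mul_of_nonneg_left h4 (by norm_num)
            _ = (M * (4 / 3) * (4 / (3 * γ))) * (x i - μ (p i)) ^ 2 := by ring
            _ ≤ K * (x i - μ (p i)) ^ 2 := by
                have hKge : M * ((4:ℝ) / 3) * (4 / (3 * γ)) ≤ K := by
                  have he : M * ((4:ℝ) / 3) * (4 / (3 * γ)) = (16 / 9) * (M / γ) := by
                    field_simp; ring
                  rw [he]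
                  have h9 : (16 / 9 : ℝ) * (M / γ) ≤ 8 * (M / γ) := by
                    apply mul_le_mul_of_nonneg_right (by norm_num) (by positivity)
                  have h8 : (8:ℝ) * (M / γ) = 8 * M / γ := by ring
                  linarith [hKM]
                exact mul_le_mul_of_nonneg_right hKge (sq_nonneg _)
      have hsum : ∑ i, v i * μ (p i) - ∑ i, v i * μ (π i) ≤ K * d2 := by
        rw [← Finset.sum_sub_distrib, hd2, Finset.mul_sum]
        exact Finset.sum_le_sum fun i _ => hterm i
      linarith

lemma tr_conj' {n : ℕ} (U W : Matrix (Fin n) (Fin n) ℝ) (a b : Fin n → ℝ) :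
    ((U * Matrix.diagonal a * Uᵀ) * (W * Matrix.diagonal b * Wᵀ)).trace
      = ∑ k, ∑ l, a k * b l * ((Uᵀ * W) k l) ^ 2 := by
  have e1 : (U * Matrix.diagonal a * Uᵀ) * (W * Matrix.diagonal b * Wᵀ)
      = U * (Matrix.diagonal a * (Uᵀ * W) * Matrix.diagonal b * Wᵀ) := by
    simp only [Matrix.mul_assoc]
  rw [e1, Matrix.trace_mul_comm]
  have e2 : Matrix.diagonal a * (Uᵀ * W) * Matrix.diagonal b * Wᵀ * U
      = Matrix.diagonal a * ((Uᵀ * W) * Matrix.diagonal b * (Uᵀ * W)ᵀ) := by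
    rw [Matrix.transpose_mul, Matrix.transpose_transpose]
    simp only [Matrix.mul_assoc]
  rw [e2]
  have e3 : ∀ i, ((Uᵀ * W) * Matrix.diagonal b * (Uᵀ * W)ᵀ) i i
      = ∑ j, b j * ((Uᵀ * W) i j) ^ 2 := by
    intro i
    rw [Matrix.mul_apply]
    refine Finset.sum_congr rfl fun j _ => ?_
    rw [Matrix.mul_diagonal, Matrix.transpose_apply]
    ring
  simp only [Matrix.trace, Matrix.diag_apply]
  refine Finset.sum_congr rfl fun i _ => ?_
  rw [Matrix.diagonal_mul, e3, Finset.mul_sum]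
  exact Finset.sum_congr rfl fun j _ => by ring

lemma sq_ds' {n : ℕ} {Q : Matrix (Fin n) (Fin n) ℝ} (h1 : Q * Qᵀ = 1) (h2 : Qᵀ * Q = 1) :
    (Matrix.of fun i j => (Q i j) ^ 2) ∈ doublyStochastic ℝ (Fin n) := by
  rw [mem_doublyStochastic_iff_sum]
  refine ⟨fun i j => sq_nonneg _, fun i => ?_, fun j => ?_⟩
  · have := congrArg (fun M => M i i) h1
    simp only [Matrix.mul_apply, Matrix.transpose_apply, Matrix.one_apply_eq] at this
    simpa [pow_two] using this
  · have := congrArg (fun M => M j j) h2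
    simp only [Matrix.mul_apply, Matrix.transpose_apply, Matrix.one_apply_eq] at this
    simpa [pow_two] using this

end Aux

set_option maxHeartbeats 1000000 in
/-- If `f` is lsc, symmetric, lower-bounded, `f(λ(X))` is finite, `v` is a Fréchet
subgradient of `f` at `λ(X)` and `U` is orthogonal with `U Diag(λ(X)) Uᵀ = X`, then
`U (Diag v) Uᵀ` is a Fréchet subgradient of `f∘λ` at `X`. -/
theorem statement12 {n : ℕ} (f : (Fin n → ℝ) → EReal)
    (hlsc : LowerSemicontinuous f) (hsym : IsSymmFn f)
    (hbdd : ∃ c : ℝ, ∀ y, (c : EReal) ≤ f y)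
    (X : Matrix (Fin n) (Fin n) ℝ) (hX : X.IsHermitian)
    (fx : ℝ) (hfx : f (eigd X) = (fx : EReal))
    (v : Fin n → ℝ) (hv : FSubV f (eigd X) v)
    (U : Matrix (Fin n) (Fin n) ℝ) (hU : U * Uᵀ = 1)
    (hUX : U * Matrix.diagonal (eigd X) * Uᵀ = X) :
    FSubM (fun M => f (eigd M)) X (U * Matrix.diagonal v * Uᵀ) := by
  classical
  set x : Fin n → ℝ := eigd X with hxdef
  have hxa : Antitone x := eigd_antitone' hX
  have hUt : Uᵀ * U = 1 := mul_eq_one_comm.mp hU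
  obtain ⟨K, hK0, hKmaster⟩ := master' x v hxa
  intro ε hε
  obtain ⟨δ₁, hδ₁pos, hδ₁⟩ := hv (ε / 2) (by positivity)
  refine ⟨min δ₁ (ε / (2 * K)), by positivity, fun Y hY ht => ?_⟩
  set μ : Fin n → ℝ := eigd Y with hμdef
  have hμa : Antitone μ := eigd_antitone' hY
  obtain ⟨W, hW1, hW2, hWY⟩ := eigd_spectral' hY
  set Q : Matrix (Fin n) (Fin n) ℝ := Uᵀ * W with hQdef
  have hQ1 : Q * Qᵀ = 1 := by
    rw [hQdef, Matrix.transpose_mul, Matrix.transpose_transpose]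
    calc Uᵀ * W * (Wᵀ * U) = Uᵀ * (W * Wᵀ) * U := by simp only [Matrix.mul_assoc]
      _ = 1 := by rw [hW1, Matrix.mul_one, hUt]
  have hQ2 : Qᵀ * Q = 1 := mul_eq_one_comm.mp hQ1
  have hs := sq_ds' hQ1 hQ2
  have hrow : ∀ i, ∑ j, (Q i j) ^ 2 = 1 := fun i => (mem_doublyStochastic_iff_sum.mp hs).2.1 i
  have hcol : ∀ j, ∑ i, (Q i j) ^ 2 = 1 := fun j => (mem_doublyStochastic_iff_sum.mp hs).2.2 j
  set T : ℝ := ((Y - X)ᵀ * (Y - X)).trace with hTdef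
  set S : ℝ := ∑ k, ∑ l, x k * μ l * (Q k l) ^ 2 with hSdef
  -- transpose facts
  have hXt : Xᵀ = X := by
    have := hX
    rwa [Matrix.IsHermitian, Matrix.conjTranspose_eq_transpose_of_trivial] at this
  have hYt : Yᵀ = Y := by
    have := hY
    rwa [Matrix.IsHermitian, Matrix.conjTranspose_eq_transpose_of_trivial] at this
  -- traces
  have htrXY : (X * Y).trace = S := by
    rw [← hUX, hWY, tr_conj' U W x μ]
  have htrXX : (X * X).trace = ∑ i, x i ^ 2 := by
    rw [← hUX, tr_conj' U U x x, hUt]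
    have : ∀ k l : Fin n, x k * x l * ((1 : Matrix (Fin n) (Fin n) ℝ) k l) ^ 2
        = if l = k then x k ^ 2 else 0 := by
      intro k l
      by_cases h : l = k
      · subst h; simp [Matrix.one_apply_eq]; ring
      · simp [Matrix.one_apply_ne' h, h]
    simp_rw [this]
    simp
  have htrYY : (Y * Y).trace = ∑ i, μ i ^ 2 := by
    rw [hWY, tr_conj' W W μ μ, hW2]
    have : ∀ k l : Fin n, μ k * μ l * ((1 : Matrix (Fin n) (Fin n) ℝ) k l) ^ 2
        = if l = k then μ k ^ 2 else 0 := by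
      intro k l
      by_cases h : l = k
      · subst h; simp [Matrix.one_apply_eq]; ring
      · simp [Matrix.one_apply_ne' h, h]
    simp_rw [this]
    simp
  have htrYX : (Y * X).trace = S := by rw [Matrix.trace_mul_comm, htrXY]
  have hTsum : T = ∑ k, ∑ l, (x k - μ l) ^ 2 * (Q k l) ^ 2 := by
    have hsub : (Y - X)ᵀ * (Y - X) = Y * Y - X * Y - (Y * X - X * X) := by
      rw [Matrix.transpose_sub, hXt, hYt, Matrix.sub_mul, Matrix.mul_sub, Matrix.mul_sub]
      abel
    have hTval : T = (∑ i, μ i ^ 2) - S - (S - ∑ i, x i ^ 2) := by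
      rw [hTdef, hsub, Matrix.trace_sub, Matrix.trace_sub, Matrix.trace_sub,
        htrYY, htrXY, htrYX, htrXX]
    have hexp : ∑ k, ∑ l, (x k - μ l) ^ 2 * (Q k l) ^ 2
        = (∑ k, x k ^ 2) - 2 * S + (∑ l, μ l ^ 2) := by
      have e : ∀ k l : Fin n, (x k - μ l) ^ 2 * (Q k l) ^ 2
          = x k ^ 2 * (Q k l) ^ 2 - 2 * (x k * μ l * (Q k l) ^ 2) + μ l ^ 2 * (Q k l) ^ 2 := by
        intro k l; ring
      simp_rw [e, Finset.sum_add_distrib, Finset.sum_sub_distrib]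
      have e1 : ∑ k, ∑ l, x k ^ 2 * (Q k l) ^ 2 = ∑ k, x k ^ 2 := by
        refine Finset.sum_congr rfl fun k _ => ?_
        rw [← Finset.mul_sum, hrow, mul_one]
      have e2 : ∑ k : Fin n, ∑ l, μ l ^ 2 * (Q k l) ^ 2 = ∑ l, μ l ^ 2 := by
        rw [Finset.sum_comm]
        refine Finset.sum_congr rfl fun l _ => ?_
        rw [← Finset.mul_sum, hcol, mul_one]
      have e3 : ∑ k : Fin n, ∑ l, 2 * (x k * μ l * (Q k l) ^ 2) = 2 * S := by
        rw [hSdef, Finset.mul_sum]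
        refine Finset.sum_congr rfl fun k _ => ?_
        rw [Finset.mul_sum]
      rw [e1, e2, e3]
    linarith [hTval, hexp]
  have hTnn : 0 ≤ T := by
    rw [hTsum]
    exact Finset.sum_nonneg fun k _ => Finset.sum_nonneg fun l _ =>
      mul_nonneg (sq_nonneg _) (sq_nonneg _)
  set t : ℝ := Real.sqrt T with htdef
  have htsq : t ^ 2 = T := Real.sq_sqrt hTnn
  have htnn : 0 ≤ t := Real.sqrt_nonneg _
  -- Hoffman--Wielandt type bound
  have hHW : ∑ i, (x i - μ i) ^ 2 ≤ T := by
    have hb : ∀ p : Equiv.Perm (Fin n),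
        ∑ i, -((x i - μ (p i)) ^ 2) ≤ -(∑ i, (x i - μ i) ^ 2) := by
      intro p
      have h := sq_sum_le' x μ hxa hμa p
      have hneg : ∑ i, -((x i - μ (p i)) ^ 2) = -∑ i, (x i - μ (p i)) ^ 2 := by
        rw [Finset.sum_neg_distrib]
      rw [hneg]
      linarith
    have hds := ds_le' hs (fun k l => -((x k - μ l) ^ 2)) (-(∑ i, (x i - μ i) ^ 2)) hb
    have hre : ∑ k, ∑ l, -((x k - μ l) ^ 2) * ((Matrix.of fun i j => Q i j ^ 2) k l) = -T := by
      rw [hTsum, ← Finset.sum_neg_distrib]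
      refine Finset.sum_congr rfl fun k _ => ?_
      rw [← Finset.sum_neg_distrib]
      refine Finset.sum_congr rfl fun l _ => ?_
      show -((x k - μ l) ^ 2) * (Q k l ^ 2) = -((x k - μ l) ^ 2 * Q k l ^ 2)
      ring
    rw [hre] at hds
    linarith
  -- sup over the stabilizer of x
  have hGne : (Finset.univ.filter
      (fun π : Equiv.Perm (Fin n) => ∀ i, x (π i) = x i)).Nonempty :=
    ⟨1, Finset.mem_filter.mpr ⟨Finset.mem_univ _, fun i => rfl⟩⟩
  set G := Finset.univ.filter (fun π : Equiv.Perm (Fin n) => ∀ i, x (π i) = x i) with hG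
  set best : ℝ := G.sup' hGne (fun π => ∑ i, v i * μ (π i)) with hbest
  have hballperm : ∀ p : Equiv.Perm (Fin n),
      ∑ i, (v i * μ (p i) - K * (x i - μ (p i)) ^ 2) ≤ best := by
    intro p
    obtain ⟨π, hπ1, hπ2⟩ := hKmaster μ hμa p
    have hmem : π ∈ G := Finset.mem_filter.mpr ⟨Finset.mem_univ _, hπ1⟩
    have hle : ∑ i, v i * μ (π i) ≤ best := Finset.le_sup' (fun π => ∑ i, v i * μ (π i)) hmem
    have hsplit : ∑ i, (v i * μ (p i) - K * (x i - μ (p i)) ^ 2)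
        = (∑ i, v i * μ (p i)) - K * ∑ i, (x i - μ (p i)) ^ 2 := by
      rw [Finset.sum_sub_distrib, ← Finset.mul_sum]
    rw [hsplit]
    linarith
  set SV : ℝ := ∑ k, ∑ l, v k * μ l * (Q k l) ^ 2 with hSVdef
  have hSVle : SV - K * T ≤ best := by
    have hds := ds_le' hs (fun k l => v k * μ l - K * (x k - μ l) ^ 2) best
      (fun p => hballperm p)
    have hre : ∑ k, ∑ l, (v k * μ l - K * (x k - μ l) ^ 2) * ((Matrix.of fun i j => Q i j ^ 2) k l)
        = SV - K * T := by
      rw [hTsum, hSVdef, Finset.mul_sum, ← Finset.sum_sub_distrib]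
      refine Finset.sum_congr rfl fun k _ => ?_
      rw [Finset.mul_sum, ← Finset.sum_sub_distrib]
      refine Finset.sum_congr rfl fun l _ => ?_
      show (v k * μ l - K * (x k - μ l) ^ 2) * (Q k l ^ 2)
          = v k * μ l * Q k l ^ 2 - K * ((x k - μ l) ^ 2 * Q k l ^ 2)
      ring
    rw [hre] at hds
    exact hds
  -- trace of V (Y - X)
  have htrVY : ((U * Matrix.diagonal v * Uᵀ) * Y).trace = SV := by
    rw [hWY, tr_conj' U W v μ]
  have htrVX : ((U * Matrix.diagonal v * Uᵀ) * X).trace = ∑ i, v i * x i := by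
    rw [← hUX, tr_conj' U U v x, hUt]
    have : ∀ k l : Fin n, v k * x l * ((1 : Matrix (Fin n) (Fin n) ℝ) k l) ^ 2
        = if l = k then v k * x k else 0 := by
      intro k l
      by_cases h : l = k
      · subst h; simp [Matrix.one_apply_eq]
      · simp [Matrix.one_apply_ne' h, h]
    simp_rw [this]
    simp
  have htrV : ((U * Matrix.diagonal v * Uᵀ) * (Y - X)).trace = SV - ∑ i, v i * x i := by
    rw [Matrix.mul_sub, Matrix.trace_sub, htrVY, htrVX]
  -- pick the maximizing permutation
  obtain ⟨π, hπmem, hπeq⟩ := Finset.exists_mem_eq_sup' hGne (fun π => ∑ i, v i * μ (π i))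
  have hπx : ∀ i, x (π i) = x i := by
    have := Finset.mem_filter.mp hπmem
    exact this.2
  set yv : Fin n → ℝ := fun i => μ (π i) with hyv
  have hynorm : ∑ i, (yv i - x i) ^ 2 = ∑ i, (x i - μ i) ^ 2 := by
    calc ∑ i, (yv i - x i) ^ 2 = ∑ i, (μ (π i) - x (π i)) ^ 2 := by
          refine Finset.sum_congr rfl fun i _ => ?_
          rw [hπx i]
      _ = ∑ i, (μ i - x i) ^ 2 := Equiv.sum_comp π (fun i => (μ i - x i) ^ 2)
      _ = ∑ i, (x i - μ i) ^ 2 := Finset.sum_congr rfl fun i _ => by ring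
  have hsqrtle : Real.sqrt (∑ i, (yv i - x i) ^ 2) ≤ t := by
    rw [hynorm]
    exact Real.sqrt_le_sqrt hHW
  have htd1 : t ≤ δ₁ := le_trans ht (min_le_left _ _)
  have htd2 : t ≤ ε / (2 * K) := le_trans ht (min_le_right _ _)
  have happ := hδ₁ yv (le_trans hsqrtle htd1)
  have hfyv : f yv = f (eigd Y) := by
    rw [hyv, hμdef] at *
    exact hsym π (eigd Y)
  have hsums : ∑ i, v i * (yv i - x i) = best - ∑ i, v i * x i := by
    calc ∑ i, v i * (yv i - x i) = ∑ i, (v i * μ (π i) - v i * x i) :=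
          Finset.sum_congr rfl fun i _ => by rw [hyv]; ring
      _ = ∑ i, v i * μ (π i) - ∑ i, v i * x i := Finset.sum_sub_distrib _ _
      _ = best - ∑ i, v i * x i := by rw [← hπeq]
  have hKT : K * T ≤ ε / 2 * t := by
    have h1 : K * t ≤ ε / 2 := by
      have := mul_le_mul_of_nonneg_left htd2 (le_of_lt hK0)
      calc K * t ≤ K * (ε / (2 * K)) := this
        _ = ε / 2 := by field_simp
    calc K * T = (K * t) * t := by rw [← htsq]; ring
      _ ≤ (ε / 2) * t := mul_le_mul_of_nonneg_right h1 htnn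
  have hsq2 : ε / 2 * Real.sqrt (∑ i, (yv i - x i) ^ 2) ≤ ε / 2 * t :=
    mul_le_mul_of_nonneg_left hsqrtle (by positivity)
  -- the real-number comparison
  have hAB : ((U * Matrix.diagonal v * Uᵀ) * (Y - X)).trace - ε * t
      ≤ (∑ i, v i * (yv i - x i)) - ε / 2 * Real.sqrt (∑ i, (yv i - x i) ^ 2) := by
    rw [htrV, hsums]
    linarith
  -- wrap up in EReal
  show f x + (((((U * Matrix.diagonal v * Uᵀ) * (Y - X)).trace - ε * t : ℝ)) : EReal)
      ≤ f (eigd Y)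
  calc f x + (((((U * Matrix.diagonal v * Uᵀ) * (Y - X)).trace - ε * t : ℝ)) : EReal)
      = ((fx + ((((U * Matrix.diagonal v * Uᵀ) * (Y - X)).trace - ε * t : ℝ)) : ℝ) : EReal) := by
        rw [hfx, ← EReal.coe_add]
    _ ≤ ((fx + ((∑ i, v i * (yv i - x i)) - ε / 2 * Real.sqrt (∑ i, (yv i - x i) ^ 2)) : ℝ)
          : EReal) := by
        rw [EReal.coe_le_coe_iff]
        linarith
    _ = f x + ((((∑ i, v i * (yv i - x i)) - ε / 2 * Real.sqrt (∑ i, (yv i - x i) ^ 2)) : ℝ)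
          : EReal) := by
        rw [EReal.coe_add, hfx]
    _ ≤ f yv := happ
    _ = f (eigd Y) := hfyv
end
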